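/- arXiv:2004.11446 — 2 statements merged into one kernel-verified Lean document; each statement's English description precedes it below -/
import Mathlib

section
/- (Direct Form II correctness, the construction underlying the paper's Theorem 1.) Let N ≥ 1, a_1, …, a_N ∈ ℝ, b_0, …, b_N ∈ ℝ, and let x : ℤ → ℝ be a causal input. Let w : ℤ → ℝ be the unique causal sequence satisfying the all-pole recurrence w(n) = x(n) − Σ_{j=1}^{N} a_j·w(n−j) for all n ≥ 0, and define y : ℤ → ℝ by y(n) = Σ_{i=0}^{N} b_i·w(n−i) for n ≥ 0 and y(n) = 0 for n < 0. Then y is the unique causal sequence satisfying the pole-zero recurrence y(n) = Σ_{i=0}^{N} b_i·x(n−i) − Σ_{j=1}^{N} a_j·y(n−j) for all n ≥ 0. In particular, the general pole-zero IIR filter is the composition of an all-pole filter followed by an FIR filter sharing the same internal state sequence w. -/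
/-- A causal sequence vanishes at negative indices. -/
def Causal (u : ℤ → ℝ) : Prop := ∀ n : ℤ, n < 0 → u n = 0

/-- `y` is a causal solution of the pole-zero (general IIR) recurrence. -/
def IsPoleZeroSol (N : ℕ) (a b : ℕ → ℝ) (x y : ℤ → ℝ) : Prop :=
  Causal y ∧ ∀ n : ℤ, 0 ≤ n →
    y n = (∑ i ∈ Finset.range (N + 1), b i * x (n - (i : ℤ)))
        - (∑ j ∈ Finset.range N, a (j + 1) * y (n - ((j : ℤ) + 1)))

/-- `w` is a causal solution of the all-pole recurrence. -/
def IsAllPoleSol (N : ℕ) (a : ℕ → ℝ) (x w : ℤ → ℝ) : Prop :=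
  Causal w ∧ ∀ n : ℤ, 0 ≤ n →
    w n = x n - ∑ j ∈ Finset.range N, a (j + 1) * w (n - ((j : ℤ) + 1))

/-- Direct Form II correctness: the FIR combination of the all-pole state `w`
is the unique causal solution of the pole-zero recurrence. -/
theorem directFormII_correct
    (N : ℕ) (hN : 1 ≤ N) (a b : ℕ → ℝ) (x : ℤ → ℝ) (hx : Causal x)
    (w : ℤ → ℝ) (hw : IsAllPoleSol N a x w)
    (y : ℤ → ℝ)
    (hyneg : ∀ n : ℤ, n < 0 → y n = 0)
    (hypos : ∀ n : ℤ, 0 ≤ n →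
      y n = ∑ i ∈ Finset.range (N + 1), b i * w (n - (i : ℤ))) :
    IsPoleZeroSol N a b x y ∧
      ∀ y' : ℤ → ℝ, IsPoleZeroSol N a b x y' → y' = y := by
  obtain ⟨hwc, hwrec⟩ := hw
  -- x in terms of w, valid for all m
  have hxw : ∀ m : ℤ, x m = w m + ∑ j ∈ Finset.range N, a (j + 1) * w (m - ((j : ℤ) + 1)) := by
    intro m
    rcases le_or_gt 0 m with hm | hm
    · have := hwrec m hm; linarith
    · rw [hx m hm, hwc m hm]
      have : ∀ j ∈ Finset.range N, a (j + 1) * w (m - ((j : ℤ) + 1)) = 0 := by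
        intro j _
        rw [hwc _ (by omega)]; ring
      rw [Finset.sum_eq_zero this]; ring
  -- y in terms of w, valid for all m
  have hyw : ∀ m : ℤ, y m = ∑ i ∈ Finset.range (N + 1), b i * w (m - (i : ℤ)) := by
    intro m
    rcases le_or_gt 0 m with hm | hm
    · exact hypos m hm
    · rw [hyneg m hm]
      symm
      apply Finset.sum_eq_zero
      intro i _
      rw [hwc _ (by omega)]; ring
  have hsol : IsPoleZeroSol N a b x y := by
    refine ⟨hyneg, fun n hn => ?_⟩
    have key : (∑ i ∈ Finset.range (N + 1), b i * x (n - (i : ℤ)))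
        - (∑ j ∈ Finset.range N, a (j + 1) * y (n - ((j : ℤ) + 1)))
        = ∑ i ∈ Finset.range (N + 1), b i * w (n - (i : ℤ)) := by
      have h1 : ∀ i ∈ Finset.range (N + 1), b i * x (n - (i : ℤ))
          = b i * w (n - (i : ℤ))
            + ∑ j ∈ Finset.range N, b i * (a (j + 1) * w (n - (i : ℤ) - ((j : ℤ) + 1))) := by
        intro i _
        rw [hxw (n - (i : ℤ)), mul_add, Finset.mul_sum]
      have h2 : ∀ j ∈ Finset.range N, a (j + 1) * y (n - ((j : ℤ) + 1))
          = ∑ i ∈ Finset.range (N + 1), b i * (a (j + 1) * w (n - (i : ℤ) - ((j : ℤ) + 1))) := by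
        intro j _
        rw [hyw (n - ((j : ℤ) + 1)), Finset.mul_sum]
        apply Finset.sum_congr rfl
        intro i _
        have : n - ((j : ℤ) + 1) - (i : ℤ) = n - (i : ℤ) - ((j : ℤ) + 1) := by ring
        rw [this]; ring
      rw [Finset.sum_congr rfl h1, Finset.sum_congr rfl h2, Finset.sum_add_distrib,
        Finset.sum_comm]
      ring
    rw [key, ← hypos n hn]
  refine ⟨hsol, fun y' hy' => ?_⟩
  obtain ⟨hy'c, hy'rec⟩ := hy'
  obtain ⟨hyc, hyrec⟩ := hsol
  have main : ∀ k : ℕ, ∀ n : ℤ, n < (k : ℤ) → y' n = y n := by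
    intro k
    induction k with
    | zero => intro n hn; rw [hy'c n (by exact_mod_cast hn), hyc n (by exact_mod_cast hn)]
    | succ k ih =>
      intro n hn
      rcases lt_or_ge n (k : ℤ) with h | h
      · exact ih n h
      · have hnk : n = (k : ℤ) := by omega
        rcases le_or_gt 0 n with hn0 | hn0
        · rw [hy'rec n hn0, hyrec n hn0]
          congr 1
          apply Finset.sum_congr rfl
          intro j _
          rw [ih (n - ((j : ℤ) + 1)) (by omega)]
        · rw [hy'c n hn0, hyc n hn0]
  funext n
  exact main (n.toNat + 1) n (by omega)
end

section
/- (Convolution representation via the impulse response.) Fix N ≥ 1, a_1, …, a_N ∈ ℝ and b_0, …, b_N ∈ ℝ, and let Φ denote the map sending a causal input x : ℤ → ℝ to the unique causal solution y of the pole-zero recurrence. Let δ : ℤ → ℝ be the unit impulse (δ(0) = 1, δ(n) = 0 for n ≠ 0) and let h = Φ(δ) be the impulse response. Then for every causal input x and every n ≥ 0, (Φ x)(n) = Σ_{k=0}^{n} h(k)·x(n−k). -/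
/-- The unit impulse `δ`. -/
def unitImpulse : ℤ → ℝ := fun n => if n = 0 then 1 else 0

/-- Convolution representation of the pole-zero filter `Φ` via its impulse
response `h = Φ δ`: for `n ≥ 0`, `(Φ x)(n) = ∑_{k=0}^{n} h(k)·x(n−k)`. -/
theorem pole_zero_filter_convolution
    (N : ℕ) (hN : 1 ≤ N) (a b : ℕ → ℝ)
    (Φ : (ℤ → ℝ) → (ℤ → ℝ))
    (hΦ : ∀ x : ℤ → ℝ, Causal x → IsPoleZeroSol N a b x (Φ x))
    (x : ℤ → ℝ) (hx : Causal x) :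
    ∀ n : ℤ, 0 ≤ n →
      Φ x n = ∑ k ∈ Finset.range (n.toNat + 1),
        Φ unitImpulse (k : ℤ) * x (n - (k : ℤ)) := by
  obtain ⟨hyc, hyr⟩ := hΦ x hx
  have hδc : Causal unitImpulse := by
    intro n hn; simp only [unitImpulse]; rw [if_neg (by omega)]
  obtain ⟨hhc, hhr⟩ := hΦ unitImpulse hδc
  have key : ∀ m : ℕ, Φ x (m:ℤ) =
      ∑ k ∈ Finset.range (m + 1), Φ unitImpulse (k:ℤ) * x ((m:ℤ) - k) := by
    intro m
    induction m using Nat.strong_induction_on with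
    | _ m IH =>
      rw [hyr (m:ℤ) (Int.ofNat_nonneg m)]
      have hexp : ∀ k ∈ Finset.range (m+1),
          Φ unitImpulse (k:ℤ) * x ((m:ℤ) - k) =
          (∑ i ∈ Finset.range (N+1),
              b i * unitImpulse ((k:ℤ) - i) * x ((m:ℤ) - k))
          - ∑ j ∈ Finset.range N,
              a (j+1) * Φ unitImpulse ((k:ℤ) - ((j:ℤ)+1)) * x ((m:ℤ) - k) := by
        intro k _
        rw [hhr (k:ℤ) (Int.ofNat_nonneg k), sub_mul, Finset.sum_mul, Finset.sum_mul]
      have T1 : ∑ k ∈ Finset.range (m+1), ∑ i ∈ Finset.range (N+1),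
            b i * unitImpulse ((k:ℤ) - i) * x ((m:ℤ) - k)
          = ∑ i ∈ Finset.range (N+1), b i * x ((m:ℤ) - i) := by
        rw [Finset.sum_comm]
        refine Finset.sum_congr rfl ?_
        intro i _
        have hstep : ∀ k ∈ Finset.range (m+1),
            b i * unitImpulse ((k:ℤ) - i) * x ((m:ℤ) - k)
            = if k = i then b i * x ((m:ℤ) - k) else 0 := by
          intro k _
          by_cases hki : k = i
          · subst hki
            simp [unitImpulse]
          · rw [if_neg hki]
            simp only [unitImpulse]
            rw [if_neg (by omega)]
            ring
        rw [Finset.sum_congr rfl hstep, Finset.sum_ite_eq' (Finset.range (m+1)) i]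
        by_cases him : i ∈ Finset.range (m+1)
        · rw [if_pos him]
        · rw [if_neg him, hx ((m:ℤ) - i)
            (by simp only [Finset.mem_range] at him; omega), mul_zero]
      have T2 : ∑ k ∈ Finset.range (m+1), ∑ j ∈ Finset.range N,
            a (j+1) * Φ unitImpulse ((k:ℤ) - ((j:ℤ)+1)) * x ((m:ℤ) - k)
          = ∑ j ∈ Finset.range N, a (j+1) * Φ x ((m:ℤ) - ((j:ℤ)+1)) := by
        rw [Finset.sum_comm]
        refine Finset.sum_congr rfl ?_
        intro j _
        by_cases hjm : j + 1 ≤ m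
        · have hΦx : Φ x ((m:ℤ) - ((j:ℤ)+1)) =
              ∑ t ∈ Finset.range ((m - (j+1)) + 1),
                Φ unitImpulse (t:ℤ) * x (((m - (j+1) : ℕ):ℤ) - t) := by
            have hcast : (m:ℤ) - ((j:ℤ)+1) = ((m - (j+1) : ℕ):ℤ) := by omega
            rw [hcast]
            exact IH (m - (j+1)) (by omega)
          rw [hΦx, Finset.mul_sum]
          rw [Finset.range_eq_Ico,
            ← Finset.sum_Ico_consecutive _ (Nat.zero_le (j+1))
              (by omega : j + 1 ≤ m + 1)]
          have hz : ∑ k ∈ Finset.Ico 0 (j+1),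
              a (j+1) * Φ unitImpulse ((k:ℤ) - ((j:ℤ)+1)) * x ((m:ℤ) - k) = 0 := by
            apply Finset.sum_eq_zero
            intro k hk
            simp only [Finset.mem_Ico] at hk
            rw [hhc ((k:ℤ) - ((j:ℤ)+1)) (by omega), mul_zero, zero_mul]
          rw [hz, zero_add, Finset.sum_Ico_eq_sum_range,
            show m + 1 - (j + 1) = (m - (j+1)) + 1 from by omega]
          refine Finset.sum_congr rfl ?_
          intro t _
          have e1 : ((j + 1 + t : ℕ):ℤ) - ((j:ℤ)+1) = (t:ℤ) := by omega
          have e2 : (m:ℤ) - ((j + 1 + t : ℕ):ℤ) = ((m - (j+1) : ℕ):ℤ) - (t:ℤ) := by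
            omega
          rw [e1, e2]
          ring
        · have hneg : (m:ℤ) - ((j:ℤ)+1) < 0 := by omega
          rw [hyc _ hneg, mul_zero]
          apply Finset.sum_eq_zero
          intro k hk
          simp only [Finset.mem_range] at hk
          rw [hhc ((k:ℤ) - ((j:ℤ)+1)) (by omega), mul_zero, zero_mul]
      rw [Finset.sum_congr rfl hexp, Finset.sum_sub_distrib, T1, T2]
  intro n hn
  obtain ⟨m, rfl⟩ := Int.eq_ofNat_of_zero_le hn
  simpa using key m
end
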